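/- Let $X_j \sim \mathrm{Poisson}(\lambda_j)$, $1 \le j \le n$, be independent, $S_n = \sum_{j=1}^n X_j$ and $W_n = \sum_{j=1}^n j X_j$. Then for $1 \le k \le n$, the partial exponential Bell polynomial satisfies $B_{n,k}(1!\lambda_1, \dots, n!\lambda_n) = \frac{n! \, P(S_n = k, W_n = n)}{P(S_n = 0)}$. -/

import Mathlib

open MeasureTheory ProbabilityTheory Real

/-- The partial (incomplete) exponential Bell polynomial
`B_{n,k}(u_1,…,u_n) = ∑_{Λ_{k,n}} n!/(c_1!⋯c_n!) ∏ (u_i/i!)^{c_i}`,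
with `Λ_{k,n} = {(c_1,…,c_n) : ∑ c_i = k, ∑ i c_i = n}`. -/
noncomputable def bellPartial (n k : ℕ) (u : ℕ → ℝ) : ℝ :=
  ∑ c ∈ (Fintype.piFinset fun _ : Fin n => Finset.range (n + 1)).filter
      (fun c => (∑ i, c i = k) ∧ ∑ i, (i.1 + 1) * c i = n),
    ((n.factorial : ℝ) / ∏ i, ((c i).factorial : ℝ)) *
      ∏ i, (u (i.1 + 1) / ((i.1 + 1).factorial : ℝ)) ^ c i

/-- probabilistic formula for partial exponential Bell polynomials:
`B_{n,k}(1!λ_1,…,n!λ_n) = n! P(S_n = k, W_n = n) / P(S_n = 0)` for independent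
`X_j ~ Poisson(λ_j)`, `S_n = ∑ X_j`, `W_n = ∑ j X_j`. -/
theorem bellPartial_eq_poisson_prob
    {Ω : Type*} [MeasurableSpace Ω] (μ : Measure Ω) [IsProbabilityMeasure μ]
    (n : ℕ) (l : ℕ → ℝ) (hl : ∀ j, 0 < l j)
    (X : Fin n → Ω → ℕ) (hXmeas : ∀ j, Measurable (X j))
    (hindep : iIndepFun X μ)
    (hXdist : ∀ j m, μ {ω | X j ω = m} =
      ENNReal.ofReal (Real.exp (-(l (j.1 + 1))) * (l (j.1 + 1)) ^ m / m.factorial))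
    (k : ℕ) (hk1 : 1 ≤ k) (hkn : k ≤ n) :
    bellPartial n k (fun j => (j.factorial : ℝ) * l j) =
      (n.factorial : ℝ) *
        (μ {ω | (∑ j : Fin n, X j ω) = k ∧ (∑ j : Fin n, (j.1 + 1) * X j ω) = n}).toReal /
        (μ {ω | (∑ j : Fin n, X j ω) = 0}).toReal := by
  classical
  set p : Fin n → ℕ → ℝ := fun j m =>
    Real.exp (-(l (j.1 + 1))) * (l (j.1 + 1)) ^ m / m.factorial with hp
  have hp_pos : ∀ j m, 0 < p j m := by
    intro j m
    apply div_pos (mul_pos (Real.exp_pos _) (pow_pos (hl _) _))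
    exact_mod_cast Nat.factorial_pos _
  -- measure of atoms
  have hatom : ∀ c : Fin n → ℕ,
      μ {ω | ∀ j, X j ω = c j} = ENNReal.ofReal (∏ j, p j (c j)) := by
    intro c
    have hset : {ω | ∀ j, X j ω = c j} = ⋂ j, X j ⁻¹' {c j} := by
      ext ω; simp [Set.mem_iInter]
    rw [hset, hindep.meas_iInter (fun j => ⟨{c j}, measurableSet_singleton _, rfl⟩)]
    have heach : ∀ j, μ (X j ⁻¹' {c j}) = ENNReal.ofReal (p j (c j)) := by
      intro j
      have : X j ⁻¹' {c j} = {ω | X j ω = c j} := by ext ω; simp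
      rw [this, hXdist j (c j)]
    rw [Finset.prod_congr rfl (fun j _ => heach j)]
    rw [← ENNReal.ofReal_prod_of_nonneg (fun j _ => (hp_pos j (c j)).le)]
  set F := (Fintype.piFinset fun _ : Fin n => Finset.range (n + 1)).filter
      (fun c => (∑ i, c i = k) ∧ ∑ i, (i.1 + 1) * c i = n) with hF
  -- event decomposition
  have hev : {ω | (∑ j : Fin n, X j ω) = k ∧ (∑ j : Fin n, (j.1 + 1) * X j ω) = n} =
      ⋃ c ∈ F, {ω | ∀ j, X j ω = c j} := by
    ext ω
    simp only [Set.mem_setOf_eq, Set.mem_iUnion]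
    constructor
    · rintro ⟨h1, h2⟩
      refine ⟨fun j => X j ω, ?_, fun j => rfl⟩
      rw [hF, Finset.mem_filter]
      refine ⟨?_, h1, h2⟩
      rw [Fintype.mem_piFinset]
      intro j
      rw [Finset.mem_range, Nat.lt_succ_iff]
      calc X j ω ≤ (j.1 + 1) * X j ω := Nat.le_mul_of_pos_left _ (Nat.succ_pos _)
        _ ≤ ∑ i : Fin n, (i.1 + 1) * X i ω := Finset.single_le_sum
            (f := fun i : Fin n => (i.1 + 1) * X i ω)
            (fun i _ => Nat.zero_le _) (Finset.mem_univ j)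
        _ = n := h2
    · rintro ⟨c, hc, hcw⟩
      rw [hF, Finset.mem_filter] at hc
      obtain ⟨-, h1, h2⟩ := hc
      constructor
      · exact (Finset.sum_congr rfl fun j _ => hcw j).trans h1
      · exact (Finset.sum_congr rfl fun j _ => by rw [hcw j]).trans h2
  have hmeasatom : ∀ c : Fin n → ℕ, MeasurableSet {ω | ∀ j, X j ω = c j} := by
    intro c
    have hset : {ω | ∀ j, X j ω = c j} = ⋂ j, X j ⁻¹' {c j} := by
      ext ω; simp [Set.mem_iInter]
    rw [hset]
    exact MeasurableSet.iInter fun j => (hXmeas j) (measurableSet_singleton _)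
  have hdisj : (F : Set (Fin n → ℕ)).PairwiseDisjoint
      (fun c => {ω | ∀ j, X j ω = c j}) := by
    intro c _ c' _ hne
    refine Set.disjoint_left.2 fun ω h1 h2 => hne ?_
    funext j; rw [← h1 j, h2 j]
  have hmu : μ {ω | (∑ j : Fin n, X j ω) = k ∧ (∑ j : Fin n, (j.1 + 1) * X j ω) = n} =
      ∑ c ∈ F, ENNReal.ofReal (∏ j, p j (c j)) := by
    rw [hev, measure_biUnion_finset hdisj (fun c _ => hmeasatom c)]
    exact Finset.sum_congr rfl fun c _ => hatom c
  -- S = 0 event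
  have h0 : μ {ω | (∑ j : Fin n, X j ω) = 0} =
      ENNReal.ofReal (∏ j : Fin n, p j 0) := by
    have : {ω | (∑ j : Fin n, X j ω) = 0} = {ω | ∀ j, X j ω = (fun _ => 0) j} := by
      ext ω
      simp [Finset.sum_eq_zero_iff]
    rw [this, hatom]
  -- pass to reals
  rw [hmu, h0, ENNReal.toReal_sum (fun c _ => ENNReal.ofReal_ne_top),
    ENNReal.toReal_ofReal (Finset.prod_nonneg fun j _ => (hp_pos j 0).le)]
  have htoR : ∀ c ∈ F, (ENNReal.ofReal (∏ j, p j (c j))).toReal = ∏ j, p j (c j) :=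
    fun c _ => ENNReal.toReal_ofReal (Finset.prod_nonneg fun j _ => (hp_pos j (c j)).le)
  rw [Finset.sum_congr rfl htoR]
  -- algebra
  have he_pos : (0:ℝ) < ∏ j : Fin n, p j 0 := Finset.prod_pos fun j _ => hp_pos j 0
  have hsplit : ∀ c : Fin n → ℕ, (∏ j, p j (c j)) =
      (∏ j : Fin n, p j 0) * ∏ j, (l (j.1 + 1) ^ (c j) / (c j).factorial) := by
    intro c
    rw [← Finset.prod_mul_distrib]
    refine Finset.prod_congr rfl fun j _ => ?_
    simp only [hp]
    field_simp
    simp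
  rw [Finset.sum_congr rfl fun c _ => hsplit c, ← Finset.mul_sum]
  rw [mul_comm (∏ j : Fin n, p j 0) (∑ c ∈ F, ∏ j : Fin n, l (j.1 + 1) ^ c j / ((c j).factorial : ℝ))]
  rw [mul_div_assoc, mul_div_assoc, div_self he_pos.ne', mul_one, bellPartial, Finset.mul_sum]
  refine Finset.sum_congr rfl fun c _ => ?_
  have h1 : ∀ j : Fin n, ((((j.1 + 1).factorial : ℝ) * l (j.1 + 1)) /
      ((j.1 + 1).factorial : ℝ)) ^ c j = l (j.1 + 1) ^ c j := by
    intro j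
    rw [mul_div_cancel_left₀ _ (Nat.cast_ne_zero.2 (Nat.factorial_ne_zero _) : ((j.1+1).factorial:ℝ) ≠ 0)]
  rw [Finset.prod_congr rfl fun j _ => h1 j, Finset.prod_div_distrib]
  ring
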